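/- arXiv:1604.06728 — 3 statements merged into one kernel-verified Lean document; each statement's English description precedes it below -/
import Mathlib

section
/- Let (a_1,…,a_n) be the d-vector of a weighted non-crossing family. Then for any three diagonals T_i, T_j, T_k of the triangulation forming a triangle, if a_i, a_j, a_k are all positive and each is strictly less than the sum of the other two, then a_i + a_j + a_k is even. -/
open scoped Classical

noncomputable section

/-- The counterclockwise arc length from `a` to `b` on the cyclically ordered vertex
set `ℤ/N` of a convex `N`-gon. -/
def arc {N : ℕ} [NeZero N] (a b : ZMod N) : ℕ := (b - a).val

/-- `D` is a diagonal of the convex `N`-gon: an unordered pair of distinct,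
non-adjacent vertices. -/
def IsDiagonal {N : ℕ} [NeZero N] (D : Sym2 (ZMod N)) : Prop :=
  ∃ a b : ZMod N, D = s(a, b) ∧ a ≠ b ∧ b - a ≠ 1 ∧ a - b ≠ 1

/-- Two chords of the convex `N`-gon cross: their endpoints strictly interleave in the
cyclic order (equivalently, the open segments meet in the interior). -/
def Crosses {N : ℕ} [NeZero N] (D E : Sym2 (ZMod N)) : Prop :=
  ∃ a b c d : ZMod N, D = s(a, b) ∧ E = s(c, d) ∧
    0 < arc a c ∧ arc a c < arc a b ∧ arc a b < arc a d

/-- The intersection number: `1` if the diagonals cross, `-1` if they coincide,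
`0` otherwise. -/
def inum {N : ℕ} [NeZero N] (D E : Sym2 (ZMod N)) : ℤ :=
  if Crosses D E then 1 else if D = E then -1 else 0

/-- A weighted non-crossing family, encoded by its multiplicity function `f`:
the support of `f` consists of pairwise distinct, pairwise non-crossing diagonals,
each with positive integer multiplicity. -/
def IsFamily {N : ℕ} [NeZero N] (f : Sym2 (ZMod N) → ℕ) : Prop :=
  (∀ D, f D ≠ 0 → IsDiagonal D) ∧ (∀ D E, f D ≠ 0 → f E ≠ 0 → ¬ Crosses D E)

/-- `T` is a triangulation of the `(n+3)`-gon: a maximal set of `n` pairwise distinct,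
pairwise non-crossing diagonals. -/
def IsTriangulation {n : ℕ} (T : Fin n → Sym2 (ZMod (n + 3))) : Prop :=
  (∀ i, IsDiagonal (T i)) ∧ Function.Injective T ∧
  (∀ i j, ¬ Crosses (T i) (T j)) ∧
  (∀ D, IsDiagonal D → (∀ i, ¬ Crosses D (T i)) → ∃ i, T i = D)

/-- The `d`-vector of a weighted non-crossing family with respect to `T`:
`a_i = Σ_D f(D) · i(D, T_i)`. -/
def dvec {n : ℕ} (T : Fin n → Sym2 (ZMod (n + 3))) (f : Sym2 (ZMod (n + 3)) → ℕ) :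
    Fin n → ℤ :=
  fun i => ∑ D : Sym2 (ZMod (n + 3)), (f D : ℤ) * inum D (T i)

/-- The diagonals `T i, T j, T k` form a triangle: they pairwise share an endpoint and
have three distinct vertices in total. -/
def FormTriangle {n : ℕ} (T : Fin n → Sym2 (ZMod (n + 3))) (i j k : Fin n) : Prop :=
  ∃ u v w : ZMod (n + 3), u ≠ v ∧ v ≠ w ∧ w ≠ u ∧
    T i = s(u, v) ∧ T j = s(v, w) ∧ T k = s(w, u)

/-- The parity condition on an integer vector `a`: for every triangle `T_i, T_j, T_k`
of the triangulation, if `a_i, a_j, a_k` are positive and each is strictly less than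
the sum of the other two, then `a_i + a_j + a_k` is even. -/
def ParityCond {n : ℕ} (T : Fin n → Sym2 (ZMod (n + 3))) (a : Fin n → ℤ) : Prop :=
  ∀ i j k, FormTriangle T i j k → 0 < a i → 0 < a j → 0 < a k →
    a i < a j + a k → a j < a i + a k → a k < a i + a j → Even (a i + a j + a k)

namespace DvecParity

variable {N : ℕ} [NeZero N]

lemma sub_val (p q : ZMod N) :
    (p - q).val = if q.val ≤ p.val then p.val - q.val else p.val + N - q.val := by
  have hp := ZMod.val_lt p
  have hq := ZMod.val_lt q
  rw [sub_eq_add_neg, ZMod.val_add, ZMod.neg_val]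
  split_ifs with h1 h2 h2
  · subst h1; simp [Nat.mod_eq_of_lt hp]
  · subst h1; simp at h2
  · have hq0 : q.val ≠ 0 := fun h => h1 (ZMod.val_injective N (by simpa using h))
    have : p.val + (N - q.val) = (p.val - q.val) + N := by omega
    rw [this, Nat.add_mod_right, Nat.mod_eq_of_lt (by omega)]
  · have hq0 : q.val ≠ 0 := fun h => h1 (ZMod.val_injective N (by simpa using h))
    rw [Nat.mod_eq_of_lt (by omega)]; omega

lemma arc_lt (a b : ZMod N) : arc a b < N := ZMod.val_lt _

lemma arc_self (a : ZMod N) : arc a a = 0 := by simp [arc]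

lemma arc_eq_zero_iff {a b : ZMod N} : arc a b = 0 ↔ a = b := by
  rw [arc, ZMod.val_eq_zero, sub_eq_zero, eq_comm]

lemma arc_left_inj {a x y : ZMod N} : arc a x = arc a y ↔ x = y := by
  constructor
  · intro h
    have h2 : x - a = y - a := ZMod.val_injective N h
    exact sub_left_inj.mp h2
  · rintro rfl; rfl

lemma arc_ne_zero {a b : ZMod N} (h : a ≠ b) : arc a b ≠ 0 :=
  fun h0 => h (arc_eq_zero_iff.mp h0)

lemma arc_chart (o p q : ZMod N) :
    arc p q = if arc o p ≤ arc o q then arc o q - arc o p else arc o q + N - arc o p := by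
  have h : q - p = (q - o) - (p - o) := by ring
  rw [arc, h, sub_val]; rfl

lemma swap1 {a b : ZMod N} (hab : a ≠ b) (x : ZMod N) :
    (0 < arc b x ∧ arc b x < arc b a) ↔ arc a b < arc a x := by
  have h1 := arc_ne_zero hab
  have h2 := arc_lt a b
  have h3 := arc_lt a x
  rw [arc_chart a b x, arc_chart a b a, arc_self]
  split_ifs <;> omega

lemma swap2 {a b : ZMod N} (hab : a ≠ b) (x : ZMod N) :
    arc b a < arc b x ↔ (0 < arc a x ∧ arc a x < arc a b) := by
  have h1 := arc_ne_zero hab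
  have h2 := arc_lt a b
  have h3 := arc_lt a x
  rw [arc_chart a b x, arc_chart a b a, arc_self]
  split_ifs <;> omega

lemma crosses_iff {a b c d : ZMod N} (hab : a ≠ b) :
    Crosses s(a,b) s(c,d) ↔
      ((0 < arc a c ∧ arc a c < arc a b) ∧ arc a b < arc a d) ∨
      ((0 < arc a d ∧ arc a d < arc a b) ∧ arc a b < arc a c) := by
  constructor
  · rintro ⟨a', b', c', d', hD, hE, h1, h2, h3⟩
    rw [Sym2.eq_iff] at hD hE
    rcases hD with ⟨rfl, rfl⟩ | ⟨rfl, rfl⟩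
    · rcases hE with ⟨rfl, rfl⟩ | ⟨rfl, rfl⟩
      · exact Or.inl ⟨⟨h1, h2⟩, h3⟩
      · exact Or.inr ⟨⟨h1, h2⟩, h3⟩
    · have hc : arc a b < arc a c' := (swap1 hab c').mp ⟨h1, h2⟩
      have hd : 0 < arc a d' ∧ arc a d' < arc a b := (swap2 hab d').mp h3
      rcases hE with ⟨rfl, rfl⟩ | ⟨rfl, rfl⟩
      · exact Or.inr ⟨hd, hc⟩
      · exact Or.inl ⟨hd, hc⟩
  · rintro (⟨⟨h1, h2⟩, h3⟩ | ⟨⟨h1, h2⟩, h3⟩)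
    · exact ⟨a, b, c, d, rfl, rfl, h1, h2, h3⟩
    · exact ⟨a, b, d, c, rfl, Sym2.eq_swap, h1, h2, h3⟩

lemma crosses_ne {a b c d : ZMod N} (h : Crosses s(a,b) s(c,d)) :
    a ≠ b ∧ c ≠ a ∧ c ≠ b ∧ d ≠ a ∧ d ≠ b := by
  have hab : a ≠ b := by
    obtain ⟨a', b', c', d', hD, -, h1, h2, -⟩ := h
    have : a' ≠ b' := by
      intro he; rw [he, arc_self] at h2; omega
    rw [Sym2.eq_iff] at hD
    rcases hD with ⟨rfl, rfl⟩ | ⟨rfl, rfl⟩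
    · exact this
    · exact this.symm
  rw [crosses_iff hab] at h
  have h2 := arc_lt a b
  have hz : arc a a = 0 := arc_self a
  constructor
  · exact hab
  rcases h with ⟨⟨hc1, hc2⟩, hd⟩ | ⟨⟨hd1, hd2⟩, hc⟩ <;>
    refine ⟨?_, ?_, ?_, ?_⟩ <;> rintro rfl <;> omega

lemma not_crosses_self (D : Sym2 (ZMod N)) : ¬ Crosses D D := by
  induction D using Sym2.ind with
  | _ a b =>
    intro h
    exact (crosses_ne h).2.1 rfl

lemma geomB {p q u v w : ZMod N} (hpq : p ≠ q) (hup : u ≠ p) (huq : u ≠ q)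
    (h : Crosses s(p,q) s(v,w)) :
    Crosses s(p,q) s(u,v) ∨ Crosses s(p,q) s(w,u) := by
  rw [crosses_iff hpq] at h
  rw [crosses_iff hpq, crosses_iff hpq]
  have b1 := arc_lt p q
  have b2 := arc_lt p u
  have b3 := arc_lt p v
  have b4 := arc_lt p w
  have e1 : arc p q ≠ 0 := arc_ne_zero hpq
  have e2 : arc p u ≠ 0 := fun h0 => hup ((arc_eq_zero_iff.mp h0).symm)
  have e3 : arc p u ≠ arc p q := fun h0 => huq (arc_left_inj.mp h0)
  omega

lemma geom111 {p q u v w : ZMod N} (hpq : p ≠ q)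
    (h1 : Crosses s(p,q) s(u,v)) (h2 : Crosses s(p,q) s(v,w))
    (h3 : Crosses s(p,q) s(w,u)) : False := by
  rw [crosses_iff hpq] at h1 h2 h3
  omega

lemma geomA {u v w x p q : ZMod N} (huv : u ≠ v) (hvw : v ≠ w) (hwu : w ≠ u)
    (hux : u ≠ x) (hpq : p ≠ q)
    (h0 : Crosses s(u,x) s(v,w)) (hnc : ¬ Crosses s(u,x) s(p,q))
    (h1 : Crosses s(p,q) s(u,v)) : Crosses s(p,q) s(v,w) := by
  rw [crosses_iff hux] at h0 hnc
  rw [crosses_iff hpq] at h1 ⊢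
  simp only [arc_chart u p u, arc_chart u p v, arc_chart u p w, arc_chart u p q,
    arc_self] at h1 ⊢
  have b1 := arc_lt u x
  have b2 := arc_lt u v
  have b3 := arc_lt u w
  have b4 := arc_lt u p
  have b5 := arc_lt u q
  have e1 : arc u v ≠ 0 := arc_ne_zero huv
  have e2 : arc u w ≠ 0 := fun h' => hwu ((arc_eq_zero_iff.mp h').symm)
  have e3 : arc u v ≠ arc u w := fun h' => hvw (arc_left_inj.mp h')
  have e4 : arc u x ≠ 0 := arc_ne_zero hux
  have e5 : arc u p ≠ arc u q := fun h' => hpq (arc_left_inj.mp h')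
  split_ifs at h1 ⊢ <;> omega

lemma geomC2 {u v w x p q : ZMod N} (huv : u ≠ v) (hvw : v ≠ w) (hwu : w ≠ u)
    (hux : u ≠ x) (hpq : p ≠ q)
    (h0 : Crosses s(u,x) s(v,w)) (hnc : ¬ Crosses s(u,x) s(p,q))
    (hA : Crosses s(p,q) s(u,v)) (hB : Crosses s(p,q) s(w,u)) : False := by
  rw [crosses_iff hux] at h0 hnc
  rw [crosses_iff hpq] at hA hB
  simp only [arc_chart u p u, arc_chart u p v, arc_chart u p w, arc_chart u p q,
    arc_self] at hA hB
  have b1 := arc_lt u x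
  have b2 := arc_lt u v
  have b3 := arc_lt u w
  have b4 := arc_lt u p
  have b5 := arc_lt u q
  have e1 : arc u v ≠ 0 := arc_ne_zero huv
  have e2 : arc u w ≠ 0 := fun h' => hwu ((arc_eq_zero_iff.mp h').symm)
  have e3 : arc u v ≠ arc u w := fun h' => hvw (arc_left_inj.mp h')
  have e4 : arc u x ≠ 0 := arc_ne_zero hux
  have e5 : arc u p ≠ arc u q := fun h' => hpq (arc_left_inj.mp h')
  split_ifs at hA hB <;> omega

/-- The crossing indicator. -/
def cind (D E : Sym2 (ZMod N)) : ℤ := if Crosses D E then 1 else 0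

lemma cind_nonneg (D E : Sym2 (ZMod N)) : 0 ≤ cind D E := by
  unfold cind; split_ifs <;> norm_num

lemma sum_inum_eq (f : Sym2 (ZMod N) → ℕ) (E : Sym2 (ZMod N))
    (h : ∀ D, f D ≠ 0 → ¬ Crosses D E) :
    ∑ D : Sym2 (ZMod N), (f D : ℤ) * inum D E = -(f E : ℤ) := by
  rw [Finset.sum_eq_single E]
  · rw [inum, if_neg (not_crosses_self E), if_pos rfl]; ring
  · intro D _ hDE
    by_cases hfD : f D = 0
    · simp [hfD]
    · rw [inum, if_neg (h D hfD), if_neg hDE, mul_zero]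
  · intro h'; exact absurd (Finset.mem_univ E) h'

lemma sum_inum_eq_cind (f : Sym2 (ZMod N) → ℕ) (E : Sym2 (ZMod N)) (hE : f E = 0) :
    ∑ D : Sym2 (ZMod N), (f D : ℤ) * inum D E
      = ∑ D : Sym2 (ZMod N), (f D : ℤ) * cind D E := by
  refine Finset.sum_congr rfl (fun D _ => ?_)
  by_cases hDE : D = E
  · subst hDE; simp [hE]
  · rw [inum, cind]
    split_ifs <;> rfl

/-- The key inequality: if there is a family diagonal through `u` crossing `s(v,w)`,
then the `s(v,w)`-crossing sum strictly dominates the sum for the two other sides. -/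
lemma key (f : Sym2 (ZMod N) → ℕ) (hf : IsFamily f)
    {u v w : ZMod N} (huv : u ≠ v) (hvw : v ≠ w) (hwu : w ≠ u)
    (hD : ∃ D, f D ≠ 0 ∧ u ∈ D ∧ Crosses D s(v,w)) :
    (∑ D : Sym2 (ZMod N), (f D : ℤ) * cind D s(u,v))
      + (∑ D : Sym2 (ZMod N), (f D : ℤ) * cind D s(w,u))
      < ∑ D : Sym2 (ZMod N), (f D : ℤ) * cind D s(v,w) := by
  obtain ⟨D0, hfD0, huD0, hcD0⟩ := hD
  obtain ⟨x, rfl⟩ := Sym2.mem_iff_exists.mp huD0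
  have hux : u ≠ x := (crosses_ne hcD0).1
  have hpos : 0 < ∑ D : Sym2 (ZMod N),
      (f D : ℤ) * (cind D s(v,w) - cind D s(u,v) - cind D s(w,u)) := by
    refine Finset.sum_pos' (fun D _ => ?_) ⟨s(u,x), Finset.mem_univ _, ?_⟩
    · by_cases hfD : f D = 0
      · simp [hfD]
      · obtain ⟨p, q, rfl, hpq, -, -⟩ := hf.1 D hfD
        have hnc1 : ¬ Crosses s(u,x) s(p,q) := hf.2 _ _ hfD0 hfD
        refine mul_nonneg (by positivity) ?_
        by_cases hci : Crosses s(p,q) s(u,v) <;> by_cases hck : Crosses s(p,q) s(w,u)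
        · exact absurd (geomC2 huv hvw hwu hux hpq hcD0 hnc1 hci hck) id
        · have hcj : Crosses s(p,q) s(v,w) := geomA huv hvw hwu hux hpq hcD0 hnc1 hci
          simp [cind, hci, hcj, hck]
        · have hcj : Crosses s(p,q) s(v,w) := by
            have e1 : s(w,v) = s(v,w) := Sym2.eq_swap
            have e2 : s(u,w) = s(w,u) := Sym2.eq_swap
            have h0' : Crosses s(u,x) s(w,v) := by rw [e1]; exact hcD0
            have h1' : Crosses s(p,q) s(u,w) := by rw [e2]; exact hck
            have := geomA (fun h => hwu h.symm) (fun h => hvw h.symm)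
              (fun h => huv h.symm) hux hpq h0' hnc1 h1'
            rwa [e1] at this
          simp [cind, hci, hcj, hck]
        · have := cind_nonneg s(p,q) s(v,w)
          simp only [cind, if_neg hci, if_neg hck] at *
          omega
    · have c1 : cind s(u,x) s(v,w) = 1 := if_pos hcD0
      have c2 : cind s(u,x) s(u,v) = 0 := by
        refine if_neg (fun h => ?_)
        exact (crosses_ne h).2.1 rfl
      have c3 : cind s(u,x) s(w,u) = 0 := by
        refine if_neg (fun h => ?_)
        exact (crosses_ne h).2.2.2.1 rfl
      rw [c1, c2, c3]
      have : (0:ℤ) < (f s(u,x) : ℤ) := by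
        exact_mod_cast Nat.pos_of_ne_zero hfD0
      linarith
  have hsplit : ∑ D : Sym2 (ZMod N),
      (f D : ℤ) * (cind D s(v,w) - cind D s(u,v) - cind D s(w,u))
      = (∑ D : Sym2 (ZMod N), (f D : ℤ) * cind D s(v,w))
        - (∑ D : Sym2 (ZMod N), (f D : ℤ) * cind D s(u,v))
        - (∑ D : Sym2 (ZMod N), (f D : ℤ) * cind D s(w,u)) := by
    rw [← Finset.sum_sub_distrib, ← Finset.sum_sub_distrib]
    exact Finset.sum_congr rfl (fun D _ => by ring)
  rw [hsplit] at hpos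
  linarith

/-- Per-diagonal parity: a diagonal not giving a "pivot" configuration crosses an even
number of the three sides of the triangle. -/
lemma evenA {u v w p q : ZMod N} (huv : u ≠ v) (hvw : v ≠ w) (hwu : w ≠ u) (hpq : p ≠ q)
    (hu : (u = p ∨ u = q) → ¬ Crosses s(p,q) s(v,w))
    (hv : (v = p ∨ v = q) → ¬ Crosses s(p,q) s(w,u))
    (hw : (w = p ∨ w = q) → ¬ Crosses s(p,q) s(u,v)) :
    Even (cind s(p,q) s(u,v) + cind s(p,q) s(v,w) + cind s(p,q) s(w,u)) := by
  by_cases hci : Crosses s(p,q) s(u,v) <;> by_cases hcj : Crosses s(p,q) s(v,w) <;>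
    by_cases hck : Crosses s(p,q) s(w,u)
  · exact absurd (geom111 hpq hci hcj hck) id
  · simp [cind, hci, hcj, hck]
  · simp [cind, hci, hcj, hck]
  · -- 100 : only s(u,v) crossed; opposite vertex w
    exfalso
    have hwp : w ≠ p := fun h => hw (Or.inl h) hci
    have hwq : w ≠ q := fun h => hw (Or.inr h) hci
    rcases geomB hpq hwp hwq hci with h | h
    · exact hck h
    · exact hcj h
  · -- 011
    simp [cind, hci, hcj, hck]
  · -- 010 : only s(v,w) crossed; opposite vertex u
    exfalso
    have hup : u ≠ p := fun h => hu (Or.inl h) hcj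
    have huq : u ≠ q := fun h => hu (Or.inr h) hcj
    rcases geomB hpq hup huq hcj with h | h
    · exact hci h
    · exact hck h
  · -- 001 : only s(w,u) crossed; opposite vertex v
    exfalso
    have hvp : v ≠ p := fun h => hv (Or.inl h) hck
    have hvq : v ≠ q := fun h => hv (Or.inr h) hck
    rcases geomB hpq hvp hvq hck with h | h
    · exact hcj h
    · exact hci h
  · simp [cind, hci, hcj, hck]

end DvecParity

open DvecParity in
/-- **Theorem (Property A of `d`-vectors).**  The `d`-vector of any weighted
non-crossing family satisfies the parity condition. -/
theorem dvec_parity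
    {n : ℕ} (hn : 1 ≤ n) (T : Fin n → Sym2 (ZMod (n + 3))) (hT : IsTriangulation T)
    (f : Sym2 (ZMod (n + 3)) → ℕ) (hf : IsFamily f) :
    ParityCond T (dvec T f) := by
  intro i j k htri hai haj hak h1 h2 h3
  obtain ⟨u, v, w, huv, hvw, hwu, hTi, hTj, hTk⟩ := htri
  -- the sides of the triangle carry no weight
  have hside : ∀ l : Fin n, 0 < dvec T f l → f (T l) = 0 := by
    intro l hl
    by_contra hne
    have hsum : dvec T f l = -(f (T l) : ℤ) :=
      sum_inum_eq f (T l) (fun D hD => hf.2 D (T l) hD hne)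
    rw [hsum] at hl
    have : (0:ℤ) ≤ (f (T l) : ℤ) := Int.natCast_nonneg _
    omega
  have hfi : f s(u,v) = 0 := hTi ▸ hside i hai
  have hfj : f s(v,w) = 0 := hTj ▸ hside j haj
  have hfk : f s(w,u) = 0 := hTk ▸ hside k hak
  have hi : dvec T f i = ∑ D : Sym2 (ZMod (n+3)), (f D : ℤ) * cind D s(u,v) := by
    unfold dvec; rw [hTi]; exact sum_inum_eq_cind f s(u,v) hfi
  have hj : dvec T f j = ∑ D : Sym2 (ZMod (n+3)), (f D : ℤ) * cind D s(v,w) := by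
    unfold dvec; rw [hTj]; exact sum_inum_eq_cind f s(v,w) hfj
  have hk : dvec T f k = ∑ D : Sym2 (ZMod (n+3)), (f D : ℤ) * cind D s(w,u) := by
    unfold dvec; rw [hTk]; exact sum_inum_eq_cind f s(w,u) hfk
  by_cases hU : ∃ D, f D ≠ 0 ∧ u ∈ D ∧ Crosses D s(v,w)
  · exfalso
    have := key f hf huv hvw hwu hU
    rw [← hi, ← hj, ← hk] at this
    linarith
  by_cases hV : ∃ D, f D ≠ 0 ∧ v ∈ D ∧ Crosses D s(w,u)
  · exfalso
    have := key f hf hvw hwu huv hV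
    rw [← hi, ← hj, ← hk] at this
    linarith
  by_cases hW : ∃ D, f D ≠ 0 ∧ w ∈ D ∧ Crosses D s(u,v)
  · exfalso
    have := key f hf hwu huv hvw hW
    rw [← hi, ← hj, ← hk] at this
    linarith
  push_neg at hU hV hW
  have htot : dvec T f i + dvec T f j + dvec T f k
      = ∑ D : Sym2 (ZMod (n+3)),
          (f D : ℤ) * (cind D s(u,v) + cind D s(v,w) + cind D s(w,u)) := by
    rw [hi, hj, hk, ← Finset.sum_add_distrib, ← Finset.sum_add_distrib]
    exact Finset.sum_congr rfl (fun D _ => by ring)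
  rw [htot]
  have hdvd : (2:ℤ) ∣ ∑ D : Sym2 (ZMod (n+3)),
      (f D : ℤ) * (cind D s(u,v) + cind D s(v,w) + cind D s(w,u)) := by
    refine Finset.dvd_sum (fun D _ => ?_)
    by_cases hfD : f D = 0
    · simp [hfD]
    · obtain ⟨p, q, rfl, hpq, -, -⟩ := hf.1 D hfD
      have hEv : Even (cind s(p,q) s(u,v) + cind s(p,q) s(v,w) + cind s(p,q) s(w,u)) := by
        refine evenA huv hvw hwu hpq ?_ ?_ ?_
        · exact fun hm => hU s(p,q) hfD (Sym2.mem_iff.mpr hm)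
        · exact fun hm => hV s(p,q) hfD (Sym2.mem_iff.mpr hm)
        · exact fun hm => hW s(p,q) hfD (Sym2.mem_iff.mpr hm)
      obtain ⟨r, hr⟩ := hEv
      exact ⟨(f s(p,q) : ℤ) * r, by rw [hr]; ring⟩
  obtain ⟨c, hc⟩ := hdvd
  exact ⟨c, by omega⟩
end
end

section
/- Fix n ≥ 2 and δ ∈ {0,1}^{n−1}. For every perfect matching γ of the snake graph G(δ) and every i ∈ [0,n], exactly one edge of γ belongs to Pl^{(i)}. -/
open scoped Classical

noncomputable section

/-- A lattice point of `ℤ²`. -/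
abbrev Pt : Type := ℤ × ℤ

/-- An edge of the unit square grid: its lower-left endpoint together with a flag,
`true` for a horizontal edge (to `p + (1,0)`), `false` for a vertical edge
(to `p + (0,1)`). -/
abbrev SEdge : Type := Pt × Bool

/-- The two endpoints of a grid edge. -/
def eEnds (e : SEdge) : Finset Pt :=
  {e.1, e.1 + (if e.2 then ((1 : ℤ), (0 : ℤ)) else ((0 : ℤ), (1 : ℤ)))}

variable (m : ℕ)

/-- Direction of the step from tile `t` to tile `t+1` (0-based tiles `0, …, m+1`,
so `n = m+2` tiles in total): `false` = the next tile is directly to the right,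
`true` = directly on top.  Tile 1 is to the right of tile 0, and three consecutive
tiles are in a common row or column iff the corresponding `δ`'s differ. -/
def sdir (δ : Fin (m + 1) → Fin 2) : ℕ → Bool
  | 0 => false
  | t + 1 =>
    if h : t + 1 ≤ m then
      (if δ ⟨t, by omega⟩ = δ ⟨t + 1, by omega⟩ then !(sdir δ t) else sdir δ t)
    else sdir δ t

/-- Lower-left corner of tile `t` of the snake graph `G(δ)`. -/
def tpos (δ : Fin (m + 1) → Fin 2) : ℕ → Pt
  | 0 => ((0 : ℤ), (0 : ℤ))
  | t + 1 => tpos δ t + (if sdir m δ t then ((0 : ℤ), (1 : ℤ)) else ((1 : ℤ), (0 : ℤ)))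

/-- The four sides of the unit tile with lower-left corner `p`. -/
def tileEdges (p : Pt) : Finset SEdge :=
  {(p, true), ((p.1, p.2 + 1), true), (p, false), ((p.1 + 1, p.2), false)}

/-- The edge set of the snake graph `G(δ)` (with `n = m+2` tiles). -/
def snakeEdges (δ : Fin (m + 1) → Fin 2) : Finset SEdge :=
  (Finset.range (m + 2)).biUnion (fun t => tileEdges (tpos m δ t))

/-- The vertex set of the snake graph `G(δ)`. -/
def snakeVerts (δ : Fin (m + 1) → Fin 2) : Finset Pt :=
  (snakeEdges m δ).biUnion eEnds

/-- `γ` is a perfect matching of the snake graph `G(δ)`: a set of edges such that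
every vertex is incident to exactly one edge of `γ`. -/
def IsPerfectMatching (δ : Fin (m + 1) → Fin 2) (γ : Finset SEdge) : Prop :=
  γ ⊆ snakeEdges m δ ∧
  ∀ v ∈ snakeVerts m δ, (γ.filter (fun e => v ∈ eEnds e)).card = 1

/-- The edge `T_i^{(i)}` (for the paper's `i ∈ [1, n-1]`, here 0-based `t = i-1`):
the bottom (resp. left) edge of tile `t+1` when tile `t+1` is to the right of
(resp. on top of) tile `t`. -/
def edgeTii (δ : Fin (m + 1) → Fin 2) (t : ℕ) : SEdge :=
  if sdir m δ t then (tpos m δ (t + 1), false) else (tpos m δ (t + 1), true)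

/-- The edge `T_{i+1}^{(i)}`: the top (resp. right) edge of tile `t` when tile `t+1`
is to the right of (resp. on top of) tile `t`. -/
def edgeTi1 (δ : Fin (m + 1) → Fin 2) (t : ℕ) : SEdge :=
  if sdir m δ t then (((tpos m δ t).1 + 1, (tpos m δ t).2), false)
  else (((tpos m δ t).1, (tpos m δ t).2 + 1), true)

/-- The edge `T_{i,i+1}`: the common edge of tiles `t` and `t+1`. -/
def edgeComm (δ : Fin (m + 1) → Fin 2) (t : ℕ) : SEdge :=
  if sdir m δ t then (tpos m δ (t + 1), true) else (tpos m δ (t + 1), false)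

/-- The three-or-two–edge sets `Pl^{(i)}`, `i ∈ [0, n]` (with `n = m+2`):
`Pl^{(0)}` consists of the bottom and left edges of the first tile; for
`i ∈ [1, n-1]`, `Pl^{(i)} = {T_{i,i+1}, T_{i+1}^{(i)}, T_i^{(i)}}`; and `Pl^{(n)}`
consists of the two edges of the last tile not in `Pl^{(n-1)}`. -/
def Pl (δ : Fin (m + 1) → Fin 2) (i : ℕ) : Finset SEdge :=
  if i = 0 then {(tpos m δ 0, true), (tpos m δ 0, false)}
  else if i ≤ m + 1 then
    {edgeComm m δ (i - 1), edgeTi1 m δ (i - 1), edgeTii m δ (i - 1)}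
  else
    {(((tpos m δ (m + 1)).1 + 1, (tpos m δ (m + 1)).2), false),
     (((tpos m δ (m + 1)).1, (tpos m δ (m + 1)).2 + 1), true)}


lemma tpos_succ (δ : Fin (m + 1) → Fin 2) (t : ℕ) :
    tpos m δ (t + 1) = if sdir m δ t then ((tpos m δ t).1, (tpos m δ t).2 + 1)
      else ((tpos m δ t).1 + 1, (tpos m δ t).2) := by
  show tpos m δ t + _ = _
  cases h : sdir m δ t <;> simp [h, Prod.ext_iff]

lemma tpos_sum (δ : Fin (m + 1) → Fin 2) : ∀ t : ℕ, (tpos m δ t).1 + (tpos m δ t).2 = (t : ℤ)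
  | 0 => by simp [tpos]
  | (t+1) => by
    rw [tpos_succ]
    have := tpos_sum δ t
    cases sdir m δ t <;> simp <;> push_cast <;> omega

lemma mem_snakeEdges (δ : Fin (m + 1) → Fin 2) (e : SEdge) :
    e ∈ snakeEdges m δ ↔ ∃ s, s ≤ m + 1 ∧ e ∈ tileEdges (tpos m δ s) := by
  simp [snakeEdges, Finset.mem_biUnion, Finset.mem_range, Nat.lt_succ_iff]

lemma eEnds_cases (v : Pt) (e : SEdge) : v ∈ eEnds e ↔
    e = (v, true) ∨ e = (v, false) ∨ e = ((v.1 - 1, v.2), true) ∨ e = ((v.1, v.2 - 1), false) := by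
  rcases e with ⟨⟨px, py⟩, d⟩; rcases v with ⟨vx, vy⟩
  cases d <;> simp [eEnds, Prod.ext_iff] <;> omega

lemma tileEdges_cases (q : Pt) (e : SEdge) : e ∈ tileEdges q ↔
    e = (q, true) ∨ e = ((q.1, q.2 + 1), true) ∨ e = (q, false) ∨ e = ((q.1 + 1, q.2), false) := by
  simp [tileEdges]

lemma not_both (e : SEdge) (x y : ℤ) :
    ¬(((x, y + 1) : Pt) ∈ eEnds e ∧ ((x + 1, y) : Pt) ∈ eEnds e) := by
  rcases e with ⟨⟨px, py⟩, d⟩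
  cases d <;> simp [eEnds, Prod.ext_iff] <;> omega

lemma Pl_weight (δ : Fin (m + 1) → Fin 2) (i : ℕ) (hi : i ≤ m + 2) (e : SEdge)
    (he : e ∈ Pl m δ i) : e.1.1 + e.1.2 = (i : ℤ) := by
  unfold Pl at he
  split at he
  · subst ‹i = 0›
    simp only [Finset.mem_insert, Finset.mem_singleton] at he
    rcases he with rfl | rfl <;> simp [tpos]
  · split at he
    · obtain ⟨t, rfl⟩ : ∃ t, i = t + 1 := ⟨i - 1, by omega⟩
      simp only [Nat.add_sub_cancel, Finset.mem_insert, Finset.mem_singleton] at he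
      have h1 := tpos_sum m δ t
      have h2 := tpos_sum m δ (t + 1)
      rcases he with rfl | rfl | rfl <;>
        simp only [edgeComm, edgeTi1, edgeTii] <;> split <;> simp <;> omega
    · have : i = m + 2 := by omega
      subst this
      have := tpos_sum m δ (m + 1)
      simp only [Finset.mem_insert, Finset.mem_singleton] at he
      rcases he with rfl | rfl <;> simp <;> push_cast at * <;> omega

lemma left_mem_Pl (δ : Fin (m + 1) → Fin 2) (i : ℕ) (hi : i ≤ m + 1) :
    ((tpos m δ i, false) : SEdge) ∈ Pl m δ i := by
  rcases i with _ | t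
  · simp [Pl]
  · simp only [Pl, if_neg (Nat.succ_ne_zero t), if_pos hi, Nat.add_sub_cancel,
      Finset.mem_insert, Finset.mem_singleton]
    by_cases h : sdir m δ t
    · simp [edgeTii, h]
    · simp [edgeComm, h]

lemma bottom_mem_Pl (δ : Fin (m + 1) → Fin 2) (i : ℕ) (hi : i ≤ m + 1) :
    ((tpos m δ i, true) : SEdge) ∈ Pl m δ i := by
  rcases i with _ | t
  · simp [Pl]
  · simp only [Pl, if_neg (Nat.succ_ne_zero t), if_pos hi, Nat.add_sub_cancel,
      Finset.mem_insert, Finset.mem_singleton]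
    by_cases h : sdir m δ t
    · simp [edgeComm, h]
    · simp [edgeTii, h]

lemma comm_mem_Pl (δ : Fin (m + 1) → Fin 2) (i : ℕ) (hi : i ≤ m) :
    edgeComm m δ i ∈ Pl m δ (i + 1) := by
  simp [Pl, Nat.succ_ne_zero, Nat.succ_le_succ hi]

lemma ti1_mem_Pl (δ : Fin (m + 1) → Fin 2) (i : ℕ) (hi : i ≤ m) :
    edgeTi1 m δ i ∈ Pl m δ (i + 1) := by
  simp [Pl, Nat.succ_ne_zero, Nat.succ_le_succ hi]

lemma tii_mem_Pl (δ : Fin (m + 1) → Fin 2) (i : ℕ) (hi : i ≤ m) :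
    edgeTii m δ i ∈ Pl m δ (i + 1) := by
  simp [Pl, Nat.succ_ne_zero, Nat.succ_le_succ hi]

lemma top_mem_Pl (δ : Fin (m + 1) → Fin 2) (i : ℕ) (hi : i ≤ m + 1) :
    (((((tpos m δ i).1, (tpos m δ i).2 + 1)), true) : SEdge) ∈ Pl m δ (i + 1) := by
  rcases Nat.lt_or_ge i (m + 1) with h | h
  · have h' : i ≤ m := by omega
    by_cases hs : sdir m δ i
    · have hc := comm_mem_Pl m δ i h'
      rwa [edgeComm, if_pos hs, tpos_succ, if_pos hs] at hc
    · have hc := ti1_mem_Pl m δ i h'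
      rwa [edgeTi1, if_neg hs] at hc
  · have : i = m + 1 := by omega
    subst this
    simp [Pl]

lemma right_mem_Pl (δ : Fin (m + 1) → Fin 2) (i : ℕ) (hi : i ≤ m + 1) :
    (((((tpos m δ i).1 + 1, (tpos m δ i).2)), false) : SEdge) ∈ Pl m δ (i + 1) := by
  rcases Nat.lt_or_ge i (m + 1) with h | h
  · have h' : i ≤ m := by omega
    by_cases hs : sdir m δ i
    · have hc := ti1_mem_Pl m δ i h'
      rwa [edgeTi1, if_pos hs] at hc
    · have hc := comm_mem_Pl m δ i h'
      rwa [edgeComm, if_neg hs, tpos_succ, if_neg hs] at hc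
  · have : i = m + 1 := by omega
    subst this
    simp [Pl]

lemma Pl_zero_def (δ : Fin (m + 1) → Fin 2) :
    Pl m δ 0 = {(tpos m δ 0, true), (tpos m δ 0, false)} := by simp [Pl]

lemma Pl_succ_def (δ : Fin (m + 1) → Fin 2) (t : ℕ) (h : t + 1 ≤ m + 1) :
    Pl m δ (t + 1) = {edgeComm m δ t, edgeTi1 m δ t, edgeTii m δ t} := by
  simp [Pl, h]

lemma Pl_last_def (δ : Fin (m + 1) → Fin 2) :
    Pl m δ (m + 2) = {(((tpos m δ (m + 1)).1 + 1, (tpos m δ (m + 1)).2), false),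
      (((tpos m δ (m + 1)).1, (tpos m δ (m + 1)).2 + 1), true)} := by
  simp [Pl]

lemma Pl_incident (δ : Fin (m + 1) → Fin 2) (i : ℕ) (hi : i ≤ m + 1) (e : SEdge)
    (he : e ∈ Pl m δ i ∨ e ∈ Pl m δ (i + 1)) :
    ((((tpos m δ i).1, (tpos m δ i).2 + 1) : Pt) ∈ eEnds e ∨
     (((tpos m δ i).1 + 1, (tpos m δ i).2) : Pt) ∈ eEnds e) := by
  rcases he with he | he
  · rcases i with _ | t
    · rw [Pl_zero_def] at he
      simp only [Finset.mem_insert, Finset.mem_singleton] at he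
      rcases he with rfl | rfl <;> simp [eEnds, tpos, Prod.ext_iff]
    · rw [Pl_succ_def m δ t hi] at he
      simp only [Finset.mem_insert, Finset.mem_singleton] at he
      have ht := tpos_succ m δ t
      rcases he with rfl | rfl | rfl <;> by_cases hs : sdir m δ t = true <;>
        simp [edgeComm, edgeTi1, edgeTii, eEnds, hs, ht, Prod.ext_iff] <;> omega
  · rcases Nat.lt_or_ge i (m + 1) with h | h
    · rw [Pl_succ_def m δ i (by omega)] at he
      simp only [Finset.mem_insert, Finset.mem_singleton] at he
      have ht := tpos_succ m δ i
      rcases he with rfl | rfl | rfl <;> by_cases hs : sdir m δ i = true <;>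
        simp [edgeComm, edgeTi1, edgeTii, eEnds, hs, ht, Prod.ext_iff] <;> omega
    · have hie : i = m + 1 := by omega
      subst hie
      rw [show m + 1 + 1 = m + 2 from rfl, Pl_last_def] at he
      simp only [Finset.mem_insert, Finset.mem_singleton] at he
      rcases he with rfl | rfl <;> simp [eEnds, Prod.ext_iff]

lemma incident_Pl (δ : Fin (m + 1) → Fin 2) (i : ℕ) (hi : i ≤ m + 1) (e : SEdge)
    (he : e ∈ snakeEdges m δ)
    (hv : (((tpos m δ i).1, (tpos m δ i).2 + 1) : Pt) ∈ eEnds e ∨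
          (((tpos m δ i).1 + 1, (tpos m δ i).2) : Pt) ∈ eEnds e) :
    e ∈ Pl m δ i ∨ e ∈ Pl m δ (i + 1) := by
  rw [mem_snakeEdges] at he
  obtain ⟨s, hs, hte⟩ := he
  rw [tileEdges_cases] at hte
  have hqs := tpos_sum m δ s
  have hqi := tpos_sum m δ i
  rw [eEnds_cases, eEnds_cases] at hv
  rcases hv with (h | h | h | h) | (h | h | h | h) <;> subst h
  · -- e = (a, true) : top edge of tile i
    exact Or.inr (top_mem_Pl m δ i hi)
  · -- e = (a, false) : needs sdir i = true, gives Tii ∈ Pl (i+1)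
    simp [Prod.ext_iff] at hte
    rcases hte with ⟨h1, h2⟩ | ⟨h1, h2⟩
    · -- tpos s = (x, y+1), so s = i+1
      have hsi : s = i + 1 := by omega
      subst hsi
      have ht := tpos_succ m δ i
      by_cases hd : sdir m δ i = true
      · rw [if_pos hd] at ht
        refine Or.inr ?_
        have := tii_mem_Pl m δ i (by omega)
        rw [edgeTii, if_pos hd] at this
        have hq : tpos m δ (i + 1) = (((tpos m δ i).1, (tpos m δ i).2 + 1) : Pt) := ht
        rwa [hq] at this
      · rw [if_neg hd] at ht
        exfalso
        rw [Prod.ext_iff] at ht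
        simp at ht
        omega
    · -- tpos s = (x - 1, y + 1), so s = i, contradiction
      exfalso; have hsi : s = i := by omega
      subst hsi; omega
  · -- e = ((x - 1, y + 1), true) : needs i ≥ 1, sdir (i-1) = false, Ti1 ∈ Pl i
    simp [Prod.ext_iff] at hte
    rcases hte with ⟨h1, h2⟩ | ⟨h1, h2⟩
    · exfalso; have hsi : s = i := by omega
      subst hsi; omega
    · -- tpos s = (x - 1, y), so s = i - 1
      have hi0 : i ≠ 0 := by rintro rfl; omega
      obtain ⟨t, rfl⟩ : ∃ t, i = t + 1 := ⟨i - 1, by omega⟩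
      · have hsi : s = t := by omega
        rw [hsi] at h1 h2
        have ht := tpos_succ m δ t
        by_cases hd : sdir m δ t = true
        · rw [if_pos hd] at ht
          exfalso
          rw [Prod.ext_iff] at ht
          simp at ht
          omega
        · rw [if_neg hd] at ht
          refine Or.inl ?_
          rw [Pl_succ_def m δ t hi]
          have hq : ((((tpos m δ (t + 1)).1 - 1, (tpos m δ (t + 1)).2 + 1), true) : SEdge)
              = edgeTi1 m δ t := by
            rw [edgeTi1, if_neg hd, Prod.ext_iff, Prod.ext_iff]
            rw [Prod.ext_iff] at ht
            simp at ht ⊢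
            omega
          rw [hq]
          simp
  · -- e = ((x, y + 1 - 1), false) = left edge of tile i
    have hq : ((((tpos m δ i).1, (tpos m δ i).2 + 1 - 1), false) : SEdge)
        = (tpos m δ i, false) := by simp
    rw [hq]
    exact Or.inl (left_mem_Pl m δ i hi)
  · -- e = (b, true) : needs sdir i = false, Tii ∈ Pl (i+1)
    simp [Prod.ext_iff] at hte
    rcases hte with ⟨h1, h2⟩ | ⟨h1, h2⟩
    · have hsi : s = i + 1 := by omega
      subst hsi
      have ht := tpos_succ m δ i
      by_cases hd : sdir m δ i = true
      · rw [if_pos hd] at ht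
        exfalso
        rw [Prod.ext_iff] at ht
        simp at ht
        omega
      · rw [if_neg hd] at ht
        refine Or.inr ?_
        have := tii_mem_Pl m δ i (by omega)
        rw [edgeTii, if_neg hd] at this
        have hq : tpos m δ (i + 1) = (((tpos m δ i).1 + 1, (tpos m δ i).2) : Pt) := ht
        rwa [hq] at this
    · exfalso; have hsi : s = i := by omega
      subst hsi; omega
  · -- e = (b, false) : right edge of tile i
    exact Or.inr (right_mem_Pl m δ i hi)
  · -- e = ((x + 1 - 1, y), true) = bottom edge of tile i
    have hq : ((((tpos m δ i).1 + 1 - 1, (tpos m δ i).2), true) : SEdge)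
        = (tpos m δ i, true) := by simp
    rw [hq]
    exact Or.inl (bottom_mem_Pl m δ i hi)
  · -- e = ((x + 1, y - 1), false) : needs i ≥ 1, sdir (i-1) = true, Ti1 ∈ Pl i
    simp [Prod.ext_iff] at hte
    rcases hte with ⟨h1, h2⟩ | ⟨h1, h2⟩
    · exfalso; have hsi : s = i := by omega
      subst hsi; omega
    · have hi0 : i ≠ 0 := by rintro rfl; omega
      obtain ⟨t, rfl⟩ : ∃ t, i = t + 1 := ⟨i - 1, by omega⟩
      · have hsi : s = t := by omega
        rw [hsi] at h1 h2
        have ht := tpos_succ m δ t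
        by_cases hd : sdir m δ t = true
        · rw [if_pos hd] at ht
          refine Or.inl ?_
          rw [Pl_succ_def m δ t hi]
          have hq : ((((tpos m δ (t + 1)).1 + 1, (tpos m δ (t + 1)).2 - 1), false) : SEdge)
              = edgeTi1 m δ t := by
            rw [edgeTi1, if_pos hd, Prod.ext_iff, Prod.ext_iff]
            rw [Prod.ext_iff] at ht
            simp at ht ⊢
            omega
          rw [hq]
          simp
        · rw [if_neg hd] at ht
          exfalso
          rw [Prod.ext_iff] at ht
          simp at ht
          omega

lemma incident_Pl0 (δ : Fin (m + 1) → Fin 2) (e : SEdge) (he : e ∈ snakeEdges m δ)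
    (hv : ((0, 0) : Pt) ∈ eEnds e) : e ∈ Pl m δ 0 := by
  rw [mem_snakeEdges] at he
  obtain ⟨s, hs, hte⟩ := he
  rw [tileEdges_cases] at hte
  have hqs := tpos_sum m δ s
  rw [eEnds_cases] at hv
  have h0 : tpos m δ 0 = ((0 : ℤ), (0 : ℤ)) := rfl
  rcases hv with h | h | h | h <;> subst h <;> rw [Pl_zero_def]
  · simp [h0]
  · simp [h0]
  · exfalso; simp [Prod.ext_iff] at hte; omega
  · exfalso; simp [Prod.ext_iff] at hte; omega

lemma vert_mem (δ : Fin (m + 1) → Fin 2) (i : ℕ) (hi : i ≤ m + 1) (v : Pt) (e : SEdge)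
    (hee : e ∈ tileEdges (tpos m δ i)) (hve : v ∈ eEnds e) : v ∈ snakeVerts m δ := by
  simp only [snakeVerts, Finset.mem_biUnion]
  exact ⟨e, (mem_snakeEdges m δ e).2 ⟨i, hi, hee⟩, hve⟩

lemma base_card (δ : Fin (m + 1) → Fin 2) (γ : Finset SEdge) (hγ : IsPerfectMatching m δ γ) :
    (γ.filter (fun e => e ∈ Pl m δ 0)).card = 1 := by
  obtain ⟨hsub, hmat⟩ := hγ
  have h0 : tpos m δ 0 = ((0 : ℤ), (0 : ℤ)) := rfl
  have hv : ((0, 0) : Pt) ∈ snakeVerts m δ := by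
    refine vert_mem m δ 0 (by omega) _ (tpos m δ 0, true) ?_ ?_
    · rw [tileEdges_cases]; tauto
    · simp [eEnds, h0]
  have h1 := hmat _ hv
  have hcong : γ.filter (fun e => e ∈ Pl m δ 0)
      = γ.filter (fun e => ((0, 0) : Pt) ∈ eEnds e) := by
    apply Finset.filter_congr
    intro e he
    constructor
    · intro h
      rw [Pl_zero_def] at h
      simp only [Finset.mem_insert, Finset.mem_singleton] at h
      rcases h with rfl | rfl <;> simp [eEnds, h0, Prod.ext_iff]
    · intro h
      exact incident_Pl0 m δ e (hsub he) h
  rw [hcong]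
  exact h1

lemma step_card (δ : Fin (m + 1) → Fin 2) (γ : Finset SEdge) (hγ : IsPerfectMatching m δ γ)
    (i : ℕ) (hi : i ≤ m + 1) :
    (γ.filter (fun e => e ∈ Pl m δ i)).card
      + (γ.filter (fun e => e ∈ Pl m δ (i + 1))).card = 2 := by
  obtain ⟨hsub, hmat⟩ := hγ
  have hva : (((tpos m δ i).1, (tpos m δ i).2 + 1) : Pt) ∈ snakeVerts m δ := by
    refine vert_mem m δ i hi _ (tpos m δ i, false) ?_ ?_
    · rw [tileEdges_cases]; tauto
    · simp [eEnds, Prod.ext_iff]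
  have hvb : (((tpos m δ i).1 + 1, (tpos m δ i).2) : Pt) ∈ snakeVerts m δ := by
    refine vert_mem m δ i hi _ (tpos m δ i, true) ?_ ?_
    · rw [tileEdges_cases]; tauto
    · simp [eEnds, Prod.ext_iff]
  have h1 := hmat _ hva
  have h2 := hmat _ hvb
  have key : (γ.filter (fun e => (((tpos m δ i).1, (tpos m δ i).2 + 1) : Pt) ∈ eEnds e)).card
      + (γ.filter (fun e => (((tpos m δ i).1 + 1, (tpos m δ i).2) : Pt) ∈ eEnds e)).card
      = (γ.filter (fun e => (((tpos m δ i).1, (tpos m δ i).2 + 1) : Pt) ∈ eEnds e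
          ∨ (((tpos m δ i).1 + 1, (tpos m δ i).2) : Pt) ∈ eEnds e)).card := by
    rw [Finset.filter_or]
    refine (Finset.card_union_of_disjoint ?_).symm
    rw [Finset.disjoint_left]
    intro e he1 he2
    simp only [Finset.mem_filter] at he1 he2
    exact not_both e (tpos m δ i).1 (tpos m δ i).2 ⟨he1.2, he2.2⟩
  have hcong : γ.filter (fun e => (((tpos m δ i).1, (tpos m δ i).2 + 1) : Pt) ∈ eEnds e
        ∨ (((tpos m δ i).1 + 1, (tpos m δ i).2) : Pt) ∈ eEnds e)
      = γ.filter (fun e => e ∈ Pl m δ i ∨ e ∈ Pl m δ (i + 1)) := by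
    apply Finset.filter_congr
    intro e he
    exact ⟨fun h => incident_Pl m δ i hi e (hsub he) h, fun h => Pl_incident m δ i hi e h⟩
  have hsplit : (γ.filter (fun e => e ∈ Pl m δ i ∨ e ∈ Pl m δ (i + 1))).card
      = (γ.filter (fun e => e ∈ Pl m δ i)).card
        + (γ.filter (fun e => e ∈ Pl m δ (i + 1))).card := by
    rw [Finset.filter_or]
    refine Finset.card_union_of_disjoint ?_
    rw [Finset.disjoint_left]
    intro e he1 he2
    simp only [Finset.mem_filter] at he1 he2
    have w1 := Pl_weight m δ i (by omega) e he1.2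
    have w2 := Pl_weight m δ (i + 1) (by omega) e he2.2
    omega
  rw [hcong, hsplit] at key
  omega

/-- **Lemma (one matched edge per `Pl^{(i)}`).**  For every perfect matching `γ` of the
snake graph `G(δ)` (with `n = m+2 ≥ 2` tiles) and every `i ∈ [0, n]`, exactly one edge
of `γ` belongs to `Pl^{(i)}`. -/
theorem perfectMatching_Pl_card
    (δ : Fin (m + 1) → Fin 2) (γ : Finset SEdge) (hγ : IsPerfectMatching m δ γ)
    (i : ℕ) (hi : i ≤ m + 2) :
    (γ.filter (fun e => e ∈ Pl m δ i)).card = 1 := by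
  have main : ∀ j, j ≤ m + 2 → (γ.filter (fun e => e ∈ Pl m δ j)).card = 1 := by
    intro j
    induction j with
    | zero => exact fun _ => base_card m δ γ hγ
    | succ t ih =>
      intro hj
      have ha := ih (by omega)
      have hb := step_card m δ γ hγ t (by omega)
      omega
  exact main i hi
end
end

section
/- Let Q̃ be a type A quiver on {1,…,n′} whose full subquiver Q on {1,…,n} is linear. Then for every GCS s ∈ {0,1}^n and every vertex r of Q̃, the r-th coordinate of g_Q(s) lies in {−1, 0, 1}. -/
open scoped Classical

noncomputable section

/-- Skew-symmetry: the defining property of the matrix encoding of a quiver. -/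
def IsSkew {m : ℕ} (B : Matrix (Fin m) (Fin m) ℤ) : Prop := ∀ i j, B j i = -B i j

/-- The underlying (simple) graph of the quiver. -/
def underlying {m : ℕ} (B : Matrix (Fin m) (Fin m) ℤ) : SimpleGraph (Fin m) :=
  SimpleGraph.fromRel (fun i j => B i j ≠ 0)

/-- `i → j → k → i` is an oriented 3-cycle of the quiver. -/
def IsCyc3 {m : ℕ} (B : Matrix (Fin m) (Fin m) ℤ) (i j k : Fin m) : Prop :=
  0 < B i j ∧ 0 < B j k ∧ 0 < B k i

/-- Degree of a vertex in the underlying graph. -/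
def udeg {m : ℕ} (B : Matrix (Fin m) (Fin m) ℤ) (v : Fin m) : ℕ :=
  (Finset.univ.filter fun j => (underlying B).Adj v j).card

/-- The number of triangles (3-cycles of the underlying graph) containing `v`. -/
def triCount {m : ℕ} (B : Matrix (Fin m) (Fin m) ℤ) (v : Fin m) : ℕ :=
  (Finset.univ.filter fun p : Fin m × Fin m =>
    p.1 < p.2 ∧ (underlying B).Adj v p.1 ∧ (underlying B).Adj v p.2 ∧
      (underlying B).Adj p.1 p.2).card

/-- `B` encodes a type `A` quiver: a quiver (no loops, no 2-cycles, and at most one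
arrow between two vertices — a pair of parallel arrows would be a length-2 simple
cycle of the underlying multigraph) whose underlying graph is connected, all of whose
simple cycles have length 3 and are oriented, all of whose vertices have degree ≤ 4,
every degree-4 vertex lying on two triangles and every degree-3 vertex on one. -/
def IsTypeA {m : ℕ} (B : Matrix (Fin m) (Fin m) ℤ) : Prop :=
  IsSkew B ∧ (∀ i j, (B i j).natAbs ≤ 1) ∧
  (underlying B).Connected ∧
  (∀ (v : Fin m) (w : (underlying B).Walk v v), w.IsCycle → w.length = 3) ∧
  (∀ i j k, (underlying B).Adj i j → (underlying B).Adj j k → (underlying B).Adj k i →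
    IsCyc3 B i j k ∨ IsCyc3 B i k j) ∧
  (∀ v, udeg B v ≤ 4) ∧
  (∀ v, udeg B v = 4 → triCount B v = 2) ∧
  (∀ v, udeg B v = 3 → triCount B v = 1)

/-- The full subquiver of (the quiver encoded by) `B` on the first `n` vertices is
linear: exactly one arrow between consecutive vertices `i, i+1` (in either direction)
and no other arrows among the first `n` vertices. -/
def LinearOn {n' : ℕ} (B : Matrix (Fin n') (Fin n') ℤ) (n : ℕ) (hn : n ≤ n') : Prop :=
  (∀ (i : ℕ) (h : i + 1 < n),
      B ⟨i, by omega⟩ ⟨i + 1, by omega⟩ ≠ 0) ∧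
  (∀ (i j : ℕ) (hi : i < n) (hj : j < n), j ≠ i + 1 → i ≠ j + 1 →
      B ⟨i, by omega⟩ ⟨j, by omega⟩ = 0)

/-- A GCS for the linear subquiver `Q` on the first `n` vertices: `s ∈ {0,1}^n` with
`(s_i, s_j) ≠ (1, 0)` for every arrow `i → j` of `Q`. -/
def IsGCSlin {n' n : ℕ} (hn : n ≤ n') (B : Matrix (Fin n') (Fin n') ℤ)
    (s : Fin n → Bool) : Prop :=
  ∀ i j : Fin n, 0 < B (Fin.castLE hn i) (Fin.castLE hn j) →
    ¬ (s i = true ∧ s j = false)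

/-- `deg^{1→}_{Q,s}(r)`: the number of arrows `j → r` of `Q̃` with `j ∈ [1,n]` and
`s_j = 1`. -/
def deg1to {n' n : ℕ} (hn : n ≤ n') (B : Matrix (Fin n') (Fin n') ℤ)
    (s : Fin n → Bool) (r : Fin n') : ℕ :=
  ∑ j : Fin n, if s j = true then (B (Fin.castLE hn j) r).toNat else 0

/-- `deg^{0←}_{Q,s}(r)`: the number of arrows `r → j` of `Q̃` with `j ∈ [1,n]` and
`s_j = 0`. -/
def deg0from {n' n : ℕ} (hn : n ≤ n') (B : Matrix (Fin n') (Fin n') ℤ)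
    (s : Fin n → Bool) (r : Fin n') : ℕ :=
  ∑ j : Fin n, if s j = false then (B r (Fin.castLE hn j)).toNat else 0

/-- The vector `g_Q(s) ∈ ℤ^{n'}`. -/
def gQ {n' n : ℕ} (hn : n ≤ n') (B : Matrix (Fin n') (Fin n') ℤ)
    (s : Fin n → Bool) (r : Fin n') : ℤ :=
  if (r : ℕ) < n ∨ ∃ i j : Fin n, IsCyc3 B r (Fin.castLE hn i) (Fin.castLE hn j) then
    (deg1to hn B s r : ℤ) + (deg0from hn B s r : ℤ) - 1
  else (deg1to hn B s r : ℤ) + (deg0from hn B s r : ℤ)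

lemma underlying_adj {m : ℕ} (B : Matrix (Fin m) (Fin m) ℤ) (i j : Fin m) :
    (underlying B).Adj i j ↔ i ≠ j ∧ (B i j ≠ 0 ∨ B j i ≠ 0) :=
  SimpleGraph.fromRel_adj _ i j

lemma exists_walkLine {n' n : ℕ} (hn : n ≤ n') (B : Matrix (Fin n') (Fin n') ℤ)
    (hlin : LinearOn B n hn) :
    ∀ (d a b : ℕ) (hab : a ≤ b) (_ : b - a = d) (hb : b < n),
    ∃ w : (underlying B).Walk ⟨a, by omega⟩ ⟨b, by omega⟩,
      w.length = b - a ∧ w.support.Nodup ∧ ∀ x ∈ w.support, a ≤ (x:ℕ) ∧ (x:ℕ) ≤ b := by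
  intro d
  induction d with
  | zero =>
    intro a b hab hd hb
    obtain rfl : a = b := by omega
    exact ⟨.nil, by simp, by simp, by simp⟩
  | succ d ih =>
    intro a b hab hd hb
    have ha1 : a + 1 ≤ b := by omega
    obtain ⟨w, hlen, hnd, hsupp⟩ := ih (a+1) b ha1 (by omega) hb
    have hBa : B ⟨a, by omega⟩ ⟨a+1, by omega⟩ ≠ 0 := hlin.1 a (by omega)
    have hadj : (underlying B).Adj ⟨a, by omega⟩ ⟨a+1, by omega⟩ := by
      rw [underlying_adj]
      exact ⟨by simp [Fin.ext_iff], Or.inl hBa⟩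
    refine ⟨.cons hadj w, ?_, ?_, ?_⟩
    · simp only [SimpleGraph.Walk.length_cons, hlen]; omega
    · simp only [SimpleGraph.Walk.support_cons, List.nodup_cons]
      refine ⟨fun hc => ?_, hnd⟩
      have := (hsupp _ hc).1; simp only [] at this; omega
    · intro x hx
      simp only [SimpleGraph.Walk.support_cons, List.mem_cons] at hx
      rcases hx with rfl | hx
      · exact ⟨by simp, by simp; omega⟩
      · have := hsupp x hx; omega

lemma neighbors_consec {n' n : ℕ} (hn : n ≤ n') (B : Matrix (Fin n') (Fin n') ℤ)
    (hcyc3 : ∀ (v : Fin n') (w : (underlying B).Walk v v), w.IsCycle → w.length = 3)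
    (hlin : LinearOn B n hn)
    {r : Fin n'} (hr : n ≤ (r:ℕ)) {a b : ℕ} (han : a < n) (hbn : b < n) (hab : a < b)
    (hadja : (underlying B).Adj ⟨a, by omega⟩ r)
    (hadjb : (underlying B).Adj ⟨b, by omega⟩ r) : b = a + 1 := by
  obtain ⟨w, hlen, hnd, hsupp⟩ :=
    exists_walkLine hn B hlin (b - a) a b (le_of_lt hab) rfl hbn
  have hrsupp : r ∉ w.support := fun hc => by have := (hsupp r hc).2; omega
  set p := w.concat hadjb with hp
  have hpPath : p.IsPath := by
    rw [SimpleGraph.Walk.isPath_def, hp, SimpleGraph.Walk.support_concat,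
      List.nodup_append]
    exact ⟨hnd, List.nodup_singleton r, by
      intro x hx y hy
      simp only [List.mem_singleton] at hy
      subst hy
      exact fun h => hrsupp (h ▸ hx)⟩
  have hedge : s(r, (⟨a, by omega⟩ : Fin n')) ∉ p.edges := by
    rw [hp, SimpleGraph.Walk.edges_concat, List.concat_eq_append, List.mem_append]
    rintro (hmem | hmem)
    · exact hrsupp (w.fst_mem_support_of_mem_edges hmem)
    · simp only [List.mem_singleton, Sym2.eq_iff, Fin.ext_iff, Fin.val_mk] at hmem
      omega
  have hcycle : (SimpleGraph.Walk.cons hadja.symm p).IsCycle := by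
    rw [SimpleGraph.Walk.cons_isCycle_iff]
    exact ⟨hpPath, hedge⟩
  have h3 := hcyc3 r _ hcycle
  rw [SimpleGraph.Walk.length_cons, hp, SimpleGraph.Walk.length_concat, hlen] at h3
  omega

/-- **Theorem.**  For a type `A` quiver `Q̃` whose full subquiver on the first `n`
vertices is linear, every coordinate of `g_Q(s)` lies in `{-1, 0, 1}` for every
GCS `s`. -/
theorem gQ_coords_in_pm_one
    {n' n : ℕ} (hpos : 1 ≤ n) (hn : n ≤ n')
    (B : Matrix (Fin n') (Fin n') ℤ) (hA : IsTypeA B) (hlin : LinearOn B n hn)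
    (s : Fin n → Bool) (hs : IsGCSlin hn B s) (r : Fin n') :
    gQ hn B s r = -1 ∨ gQ hn B s r = 0 ∨ gQ hn B s r = 1 := by
  obtain ⟨hskew, habs, hconn, hcyc3, hori, hdeg, h4, h3⟩ := hA
  set t : Fin n → ℕ := fun j =>
    (if s j = true then (B (Fin.castLE hn j) r).toNat else 0) +
    (if s j = false then (B r (Fin.castLE hn j)).toNat else 0) with ht
  have hD : deg1to hn B s r + deg0from hn B s r = ∑ j, t j := by
    rw [deg1to, deg0from, ← Finset.sum_add_distrib]
  have ht1 : ∀ j, t j ≤ 1 := by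
    intro j
    have h1 := habs (Fin.castLE hn j) r
    have h2 := habs r (Fin.castLE hn j)
    simp only [ht]
    cases hsj : s j <;> simp [hsj] <;> omega
  have ht0 : ∀ j, B (Fin.castLE hn j) r = 0 → t j = 0 := by
    intro j h
    have h2 : B r (Fin.castLE hn j) = 0 := by
      rw [hskew (Fin.castLE hn j) r, h, neg_zero]
    simp [ht, h, h2]
  by_cases hrn : (r : ℕ) < n
  · -- r is on the line
    have hzero : ∀ j : Fin n, ¬((j:ℕ)+1 = (r:ℕ) ∨ (r:ℕ)+1 = (j:ℕ)) → t j = 0 := by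
      intro j hj
      apply ht0
      exact hlin.2 (j:ℕ) (r:ℕ) j.2 hrn (by omega) (by omega)
    have hsum : ∑ j, t j ≤ 2 := by
      have h1 : ∑ j ∈ Finset.univ.filter
          (fun j : Fin n => (j:ℕ)+1 = (r:ℕ) ∨ (r:ℕ)+1 = (j:ℕ)), t j = ∑ j, t j :=
        Finset.sum_filter_of_ne (fun x _ hx => by
          by_contra hc; exact hx (hzero x hc))
      rw [← h1]
      calc ∑ j ∈ Finset.univ.filter
            (fun j : Fin n => (j:ℕ)+1 = (r:ℕ) ∨ (r:ℕ)+1 = (j:ℕ)), t j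
          ≤ ∑ _j ∈ Finset.univ.filter
            (fun j : Fin n => (j:ℕ)+1 = (r:ℕ) ∨ (r:ℕ)+1 = (j:ℕ)), 1 :=
            Finset.sum_le_sum (fun i _ => ht1 i)
        _ = (Finset.univ.filter
            (fun j : Fin n => (j:ℕ)+1 = (r:ℕ) ∨ (r:ℕ)+1 = (j:ℕ))).card := by simp
        _ ≤ ({(r:ℕ)-1, (r:ℕ)+1} : Finset ℕ).card :=
            Finset.card_le_card_of_injOn (fun j => (j:ℕ))
              (fun x hx => by
                simp only [Finset.mem_coe, Finset.mem_filter] at hx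
                simp only [Finset.mem_coe, Finset.mem_insert, Finset.mem_singleton]
                omega)
              (fun x _ y _ h => Fin.ext h)
        _ ≤ 2 := le_trans (Finset.card_insert_le _ _) (by simp)
    simp only [gQ]
    rw [if_pos (Or.inl hrn)]
    omega
  · -- r is off the line
    have hr : n ≤ (r:ℕ) := by omega
    set S := Finset.univ.filter (fun j : Fin n => t j ≠ 0) with hS
    have hDS : ∑ j, t j = ∑ j ∈ S, t j :=
      (Finset.sum_filter_of_ne (fun x _ hx => hx)).symm
    have hadjS : ∀ j ∈ S, (underlying B).Adj (Fin.castLE hn j) r := by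
      intro j hj
      simp only [hS, Finset.mem_filter] at hj
      rw [underlying_adj]
      refine ⟨fun h => ?_, ?_⟩
      · have := congrArg Fin.val h
        simp only [Fin.coe_castLE] at this
        have := j.2; omega
      · by_contra hc
        push_neg at hc
        exact hj.2 (ht0 j hc.1)
    have hcons : ∀ j ∈ S, ∀ k ∈ S, (j:ℕ) < (k:ℕ) → (k:ℕ) = (j:ℕ)+1 := by
      intro j hj k hk hlt
      exact neighbors_consec hn B hcyc3 hlin hr j.2 k.2 hlt (hadjS j hj) (hadjS k hk)
    have key : ∀ u ∈ S, ∀ v ∈ S, u ≠ v → ((v:ℕ)=(u:ℕ)+1 ∨ (u:ℕ)=(v:ℕ)+1) := by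
      intro u hu v hv huv
      rcases Nat.lt_trichotomy (u:ℕ) (v:ℕ) with h|h|h
      · exact Or.inl (hcons u hu v hv h)
      · exact absurd (Fin.ext h) huv
      · exact Or.inr (hcons v hv u hu h)
    have hcard : S.card ≤ 2 := by
      by_contra hc
      push_neg at hc
      obtain ⟨x, y, z, hx, hy, hz, hxy, hxz, hyz⟩ := Finset.two_lt_card_iff.mp hc
      have k1 := key x hx y hy hxy
      have k2 := key x hx z hz hxz
      have k3 := key y hy z hz hyz
      omega
    have hsum : ∑ j, t j ≤ S.card := by
      rw [hDS]
      calc ∑ j ∈ S, t j ≤ ∑ _j ∈ S, 1 := Finset.sum_le_sum (fun i _ => ht1 i)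
        _ = S.card := by simp
    have hb2 : ∑ j, t j ≤ 2 := le_trans hsum hcard
    by_cases h2 : 2 ≤ S.card
    · have h1lt : 1 < S.card := by omega
      obtain ⟨x, hx, y, hy, hxy⟩ := Finset.one_lt_card.mp h1lt
      have hmain : ∃ a b : Fin n, (b:ℕ) = (a:ℕ)+1 ∧ a ∈ S ∧ b ∈ S := by
        rcases Nat.lt_trichotomy (x:ℕ) (y:ℕ) with h|h|h
        · exact ⟨x, y, hcons x hx y hy h, hx, hy⟩
        · exact absurd (Fin.ext h) hxy
        · exact ⟨y, x, hcons y hy x hx h, hy, hx⟩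
      obtain ⟨a, b, hba, haS, hbS⟩ := hmain
      have hAa : (underlying B).Adj r (Fin.castLE hn a) := (hadjS a haS).symm
      have hAb : (underlying B).Adj (Fin.castLE hn b) r := hadjS b hbS
      have hab : (underlying B).Adj (Fin.castLE hn a) (Fin.castLE hn b) := by
        rw [underlying_adj]
        refine ⟨fun h => ?_, Or.inl ?_⟩
        · have := congrArg Fin.val h
          simp only [Fin.coe_castLE] at this
          omega
        · have hb1 : (a:ℕ)+1 < n := by have := b.2; omega
          have hB := hlin.1 (a:ℕ) hb1
          rw [show (Fin.castLE hn b) = (⟨(a:ℕ)+1, by omega⟩ : Fin n') from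
            Fin.ext (by simp [hba])]
          exact hB
      have htri := hori r (Fin.castLE hn a) (Fin.castLE hn b) hAa hab hAb
      have hcond : (r:ℕ) < n ∨ ∃ i j : Fin n,
          IsCyc3 B r (Fin.castLE hn i) (Fin.castLE hn j) :=
        Or.inr (htri.elim (fun h => ⟨a, b, h⟩) (fun h => ⟨b, a, h⟩))
      simp only [gQ]
      rw [if_pos hcond]
      omega
    · have hsum1 : ∑ j, t j ≤ 1 := by omega
      simp only [gQ]
      split <;> omega

end
end
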